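/- arXiv:1807.06152 — 8 statements merged into one kernel-verified Lean document; each statement's English description precedes it below -/
import Mathlib

section
/- Let A : E → E* be a bounded skew linear operator on a real Banach space E, let x** ∈ E**, λ > 0, and suppose A* x** lies in the norm closure of the range of A + λJ, where J is the duality map. Then -⟨A* x**, x**⟩ ≤ (λ/4)‖x**‖². -/
lemma skew_range_bound_aux (t N d l e v : ℝ) (hl : 0 < l) (hN : 0 ≤ N) (ht : 0 ≤ t)
    (hd0 : 0 < d) (hd1 : d ≤ 1)
    (hde : d * (3 / 2 * N + 1 / (4 * l) + 1) ≤ e)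
    (hv : v ≤ l * N * t + d * t - l * t ^ 2 + N * d) :
    v ≤ l / 4 * N ^ 2 + e := by
  have h4l : (0:ℝ) < 4 * l := by linarith
  have hexp : d * (3 / 2 * N + 1 / (4 * l) + 1) * (4 * l) = 6 * l * N * d + d + 4 * l * d := by
    field_simp; ring
  have key : (l * N * t + d * t - l * t ^ 2 + N * d) * (4 * l) ≤ (l / 4 * N ^ 2 + e) * (4 * l) := by
    nlinarith [sq_nonneg (2 * l * t - (l * N + d)),
      mul_le_mul_of_nonneg_right hde h4l.le, hexp,
      mul_le_mul_of_nonneg_left hd1 hd0.le,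
      mul_nonneg (mul_nonneg hl.le hN) hd0.le]
  have := le_of_mul_le_mul_right key h4l
  linarith


theorem skew_range_bound {E : Type*} [NormedAddCommGroup E] [NormedSpace ℝ E]
    [CompleteSpace E] (A : E →L[ℝ] StrongDual ℝ E)
    (hskew : ∀ x : E, A x x = 0)
    (xss : StrongDual ℝ (StrongDual ℝ E)) (lam : ℝ) (hlam : 0 < lam)
    (h : (xss.comp A) ∈ closure {y : StrongDual ℝ E |
        ∃ (x : E) (xs : StrongDual ℝ E),
          ‖xs‖ = ‖x‖ ∧ xs x = ‖x‖ ^ 2 ∧ y = A x + lam • xs}) :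
    - xss (xss.comp A) ≤ lam / 4 * ‖xss‖ ^ 2 := by
  set f := xss.comp A with hf
  have hF : (0:ℝ) ≤ ‖xss‖ := xss.opNorm_nonneg
  refine le_of_forall_pos_le_add ?_
  intro ε hε
  set C : ℝ := 3/2 * ‖xss‖ + 1/(4*lam) + 1 with hC
  have hCpos : 0 < C := by positivity
  set δ : ℝ := min 1 (ε / C) with hδ
  have hδpos : 0 < δ := lt_min one_pos (div_pos hε hCpos)
  have hδ1 : δ ≤ 1 := min_le_left _ _
  have hδε : δ * C ≤ ε := by
    rw [← le_div_iff₀ hCpos]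
    exact min_le_right _ _
  obtain ⟨y, hyS, hyd⟩ := Metric.mem_closure_iff.1 h δ hδpos
  obtain ⟨x, xs, hxs, hxsx, hy⟩ := hyS
  have hd : ‖f - y‖ < δ := by rwa [← dist_eq_norm]
  have hx0 : (0:ℝ) ≤ ‖x‖ := norm_nonneg _
  -- xss y = f x + lam * xss xs
  have h1 : xss y = f x + lam * xss xs := by
    rw [hy]
    simp [hf]
  -- y x = lam * ‖x‖^2
  have h2 : y x = lam * ‖x‖ ^ 2 := by
    rw [hy]
    simp [hskew, hxsx]
  -- f x ≥ y x - δ * ‖x‖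
  have h3 : y x - δ * ‖x‖ ≤ f x := by
    have := (y - f).le_opNorm x
    have habs : |(y - f) x| ≤ ‖y - f‖ * ‖x‖ := by
      simpa [Real.norm_eq_abs] using this
    have hn : ‖y - f‖ = ‖f - y‖ := norm_sub_rev _ _
    have h4 : (y - f) x ≤ δ * ‖x‖ := by
      have h4a := (abs_le.1 habs).2
      have h4b : ‖y - f‖ * ‖x‖ ≤ δ * ‖x‖ := by
        rw [hn]; exact mul_le_mul_of_nonneg_right hd.le hx0
      linarith
    rw [ContinuousLinearMap.sub_apply] at h4
    linarith
  -- xss xs ≥ -(‖xss‖ * ‖x‖)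
  have h5 : -(‖xss‖ * ‖x‖) ≤ xss xs := by
    have := xss.le_opNorm xs
    have habs : |xss xs| ≤ ‖xss‖ * ‖xs‖ := by
      simpa [Real.norm_eq_abs] using this
    have := (abs_le.1 habs).1
    rw [hxs] at this
    linarith
  -- -xss f ≤ -xss y + ‖xss‖ * δ
  have h6 : - xss f ≤ - xss y + ‖xss‖ * δ := by
    have := xss.le_opNorm (y - f)
    have habs : |xss (y - f)| ≤ ‖xss‖ * ‖y - f‖ := by
      simpa [Real.norm_eq_abs] using this
    have hn : ‖y - f‖ = ‖f - y‖ := norm_sub_rev _ _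
    have hub : xss (y - f) ≤ ‖xss‖ * δ := by
      have h6a := (abs_le.1 habs).2
      have h6b : ‖xss‖ * ‖y - f‖ ≤ ‖xss‖ * δ := by
        rw [hn]; exact mul_le_mul_of_nonneg_left hd.le hF
      linarith
    rw [map_sub] at hub
    linarith
  -- combine
  have h5' : -(lam * xss xs) ≤ lam * (‖xss‖ * ‖x‖) := by
    have := mul_le_mul_of_nonneg_left h5 hlam.le
    linarith
  have ha : - xss f ≤ lam * ‖xss‖ * ‖x‖ + δ * ‖x‖ - lam * ‖x‖ ^ 2 + ‖xss‖ * δ := by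
    linarith [h1, h2, h3, h5', h6]
  exact skew_range_bound_aux ‖x‖ ‖xss‖ δ lam ε _ hlam hF hx0 hδpos hδ1 hδε ha
end

section
/- The Gossez operator G : ℓ¹ → ℓ∞ defined by (Gx)_m = Σ_{n > m} x_n − Σ_{n < m} x_n is a bounded linear operator with ⟨x, Gx⟩ = 0 for all x ∈ ℓ¹ (i.e., G is skew). -/
noncomputable section
open scoped ENNReal
open Filter

abbrev ell1 := lp (fun _ : ℕ => ℝ) 1
abbrev ellInfty := lp (fun _ : ℕ => ℝ) ∞

/-- The Gossez operator, coordinatewise: (Gx)_m = Σ_{n>m} x_n − Σ_{n<m} x_n. -/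
def Gfun (x : ℕ → ℝ) (m : ℕ) : ℝ :=
  (∑' n, if m < n then x n else 0) - ∑ n ∈ Finset.range m, x n

/-- The all-ones sequence e* ∈ ℓ∞. -/
def eStar : ellInfty :=
  ⟨fun _ => (1 : ℝ), memℓp_infty ⟨1, by rintro r ⟨i, rfl⟩; simp⟩⟩

/-- The m-th standard unit vector e*_m ∈ ℓ∞. -/
def eVec (m : ℕ) : ellInfty := lp.single ∞ m (1 : ℝ)

namespace GossezAux

/-- the kernel -/
def g (x : ℕ → ℝ) (m n : ℕ) : ℝ :=
  (if m < n then x n else 0) - (if n < m then x n else 0)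

lemma abs_g_le (x : ℕ → ℝ) (m n : ℕ) : |g x m n| ≤ |x n| := by
  unfold g
  rcases lt_trichotomy m n with h | h | h
  · simp [h, not_lt.2 h.le]
  · simp [h]
  · simp [h, not_lt.2 h.le]

lemma summable_abs (x : ell1) : Summable (fun n => |x n|) := by
  simpa using (lp.memℓp x).summable (by norm_num : (0:ℝ) < (1:ℝ≥0∞).toReal)

lemma summable_cut (x : ell1) (m : ℕ) :
    Summable (fun n => if m < n then x n else 0) := by
  refine (summable_abs x).of_norm_bounded (fun n => ?_)
  by_cases h : m < n <;> simp [h, Real.norm_eq_abs, le_abs_self, abs_nonneg]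

lemma summable_cut' (x : ell1) (m : ℕ) :
    Summable (fun n => if n < m then x n else 0) := by
  refine (summable_abs x).of_norm_bounded (fun n => ?_)
  by_cases h : n < m <;> simp [h, Real.norm_eq_abs, le_abs_self, abs_nonneg]

lemma summable_g (x : ell1) (m : ℕ) : Summable (g x m) :=
  (summable_abs x).of_norm_bounded (fun n => by
    simpa [Real.norm_eq_abs] using abs_g_le x m n)

lemma tsum_cut' (x : ell1) (m : ℕ) :
    (∑' n, if n < m then x n else 0) = ∑ n ∈ Finset.range m, x n := by
  rw [tsum_eq_sum (s := Finset.range m)]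
  · exact Finset.sum_congr rfl (fun n hn => by simp [Finset.mem_range.mp hn])
  · intro n hn
    rw [Finset.mem_range] at hn
    exact if_neg hn

lemma Gfun_eq (x : ell1) (m : ℕ) : Gfun x m = ∑' n, g x m n := by
  unfold Gfun g
  rw [Summable.tsum_sub (summable_cut x m) (summable_cut' x m), tsum_cut']

set_option maxHeartbeats 1000000 in
lemma abs_Gfun_le (x : ell1) (m : ℕ) : |Gfun x m| ≤ ∑' n, |x n| := by
  rw [Gfun_eq]
  calc |∑' n, g x m n| ≤ ∑' n, |g x m n| := by
        have hn : Summable fun n => ‖g (⇑x) m n‖ := by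
          simpa only [Real.norm_eq_abs] using (summable_g x m).abs
        simpa only [Real.norm_eq_abs] using norm_tsum_le_tsum_norm hn
    _ ≤ ∑' n, |x n| :=
        Summable.tsum_le_tsum (abs_g_le x m) ((summable_abs x).of_nonneg_of_le
          (fun n => abs_nonneg _) (abs_g_le x m)) (summable_abs x)

lemma memℓp_Gfun (x : ell1) : Memℓp (Gfun x) ∞ := by
  apply memℓp_infty
  refine ⟨∑' n, |x n|, ?_⟩
  rintro r ⟨m, rfl⟩
  simpa [Real.norm_eq_abs] using abs_Gfun_le x m

lemma norm_ell1 (x : ell1) : ‖x‖ = ∑' n, |x n| := by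
  rw [lp.norm_eq_tsum_rpow (by norm_num) x]
  simp [Real.norm_eq_abs]

lemma Gfun_add (x y : ell1) (m : ℕ) :
    Gfun (⇑(x + y)) m = Gfun x m + Gfun y m := by
  have hxy : ∀ n, (if m < n then (x + y) n else 0)
      = (if m < n then x n else 0) + (if m < n then y n else 0) := by
    intro n; by_cases h : m < n <;> simp [h, lp.coeFn_add]
  unfold Gfun
  rw [tsum_congr hxy, Summable.tsum_add (summable_cut x m) (summable_cut y m)]
  simp [lp.coeFn_add, Finset.sum_add_distrib]
  erw [Finset.sum_add_distrib]
  ring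

lemma Gfun_smul (c : ℝ) (x : ell1) (m : ℕ) :
    Gfun (⇑(c • x)) m = c * Gfun x m := by
  have hxy : ∀ n, (if m < n then (c • x) n else 0)
      = c * (if m < n then x n else 0) := by
    intro n; by_cases h : m < n <;> simp [h, lp.coeFn_smul]
  unfold Gfun
  rw [tsum_congr hxy, tsum_mul_left, mul_sub, Finset.mul_sum]
  congr 1

/-- The Gossez operator as a linear map. -/
def Glin : ell1 →ₗ[ℝ] ellInfty where
  toFun x := ⟨Gfun x, memℓp_Gfun x⟩
  map_add' x y := by
    ext m
    exact Gfun_add x y m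
  map_smul' c x := by
    ext m
    exact Gfun_smul c x m

lemma norm_Glin_le (x : ell1) : ‖Glin x‖ ≤ 1 * ‖x‖ := by
  rw [one_mul]
  apply lp.norm_le_of_forall_le (norm_nonneg x)
  intro m
  show ‖Gfun x m‖ ≤ ‖x‖
  rw [Real.norm_eq_abs, norm_ell1]
  exact abs_Gfun_le x m

def G : ell1 →L[ℝ] ellInfty := Glin.mkContinuous 1 norm_Glin_le

lemma G_apply (x : ell1) (m : ℕ) : G x m = Gfun x m := by
  rw [G, LinearMap.mkContinuous_apply]
  rfl

lemma summable_h (x : ell1) :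
    Summable (fun p : ℕ × ℕ => x p.1 * g x p.1 p.2) := by
  have hs : Summable (fun p : ℕ × ℕ => |x p.1| * |x p.2|) :=
    summable_mul_of_summable_norm (f := fun n => |x n|) (g := fun n => |x n|)
      (by simpa only [Real.norm_eq_abs, abs_abs] using summable_abs x)
      (by simpa only [Real.norm_eq_abs, abs_abs] using summable_abs x)
  refine hs.of_norm_bounded (fun p => ?_)
  rw [Real.norm_eq_abs, abs_mul]
  exact mul_le_mul_of_nonneg_left (abs_g_le x p.1 p.2) (abs_nonneg _)

lemma g_antisymm (x : ℕ → ℝ) (m n : ℕ) :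
    x m * g x m n = -(x n * g x n m) := by
  unfold g
  rcases lt_trichotomy m n with h | h | h
  · simp [h, not_lt.2 h.le]; ring
  · simp [h]
  · simp [h, not_lt.2 h.le]; ring

lemma skew (x : ell1) : ∑' m, x m * Gfun x m = 0 := by
  have hsum : ∀ m, x m * Gfun x m = ∑' n, x m * g x m n := by
    intro m; rw [Gfun_eq, tsum_mul_left]
  set F : ℕ × ℕ → ℝ := fun p => x p.1 * g x p.1 p.2 with hF
  have hS : Summable F := summable_h x
  have h1 : ∑' m, x m * Gfun x m = ∑' p : ℕ × ℕ, F p := by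
    rw [tsum_congr hsum, ← Summable.tsum_prod' hS (fun m => (summable_g x m).mul_left (x m))]
  have h2 : ∑' p : ℕ × ℕ, F p = -∑' p : ℕ × ℕ, F p := by
    calc ∑' p : ℕ × ℕ, F p = ∑' p : ℕ × ℕ, F ((Equiv.prodComm ℕ ℕ) p) :=
          ((Equiv.prodComm ℕ ℕ).tsum_eq F).symm
      _ = ∑' p : ℕ × ℕ, -F p := tsum_congr fun p => by
          simpa [hF, Equiv.prodComm] using g_antisymm x p.2 p.1
      _ = -∑' p : ℕ × ℕ, F p := tsum_neg
  rw [h1]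
  linarith

end GossezAux

theorem gossez_operator_bounded_skew :
    ∃ G : ell1 →L[ℝ] ellInfty,
      (∀ (x : ell1) (m : ℕ), G x m = Gfun x m) ∧
      ∀ x : ell1, ∑' m, x m * G x m = 0 := by
  refine ⟨GossezAux.G, GossezAux.G_apply, fun x => ?_⟩
  have : ∀ m, x m * GossezAux.G x m = x m * Gfun x m := fun m => by
    rw [GossezAux.G_apply]
  rw [tsum_congr this]
  exact GossezAux.skew x
end
end

section
/- For all w, x ∈ ℓ¹, ⟨w, Gx⟩ = −⟨x, Gw⟩, where G is the Gossez operator. -/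
noncomputable section
open scoped ENNReal
open Filter

def sgn (m n : ℕ) : ℝ := if m < n then 1 else if n < m then -1 else 0

lemma sgn_swap (m n : ℕ) : sgn n m = - sgn m n := by
  unfold sgn; split_ifs <;> first | omega | norm_num

lemma abs_sgn_le (m n : ℕ) : |sgn m n| ≤ 1 := by
  unfold sgn; split_ifs <;> norm_num

lemma ell1_norm_summable (x : ell1) : Summable fun n => ‖x n‖ := by
  have := (lp.memℓp x).summable (p := 1) (by norm_num)
  simpa using this

lemma ell1_summable (x : ell1) : Summable fun n => x n :=
  (ell1_norm_summable x).of_norm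

lemma Gfun_eq (x : ell1) (m : ℕ) : Gfun (x : ℕ → ℝ) m = ∑' n, sgn m n * x n := by
  have h1 : Summable fun n => if m < n then x n else 0 := by
    refine ((ell1_summable x).indicator {n | m < n}).congr fun n => ?_
    simp [Set.indicator_apply, Set.mem_setOf_eq]
  have h2 : Summable fun n => if n < m then x n else 0 :=
    summable_of_ne_finset_zero (s := Finset.range m) (by intro n hn; simp at hn; simp [hn, Nat.not_lt.2 hn])
  have h3 : ∑ n ∈ Finset.range m, x n = ∑' n, if n < m then x n else 0 := by
    rw [tsum_eq_sum (s := Finset.range m) (by intro n hn; simp at hn; simp [Nat.not_lt.2 hn])]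
    exact Finset.sum_congr rfl (by intro n hn; simp at hn; simp [hn])
  rw [Gfun, h3, ← Summable.tsum_sub h1 h2]
  congr 1; funext n
  rcases Nat.lt_trichotomy m n with h | h | h
  · simp [sgn, h, Nat.lt_asymm h]
  · subst h; simp [sgn]
  · simp [sgn, h, Nat.lt_asymm h, Nat.lt_irrefl, neg_one_mul]

lemma summable_F (w x : ell1) : Summable fun p : ℕ × ℕ => w p.1 * sgn p.1 p.2 * x p.2 := by
  have hb : Summable fun p : ℕ × ℕ => ‖(w : ℕ → ℝ) p.1‖ * ‖(x : ℕ → ℝ) p.2‖ :=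
    (ell1_norm_summable w).mul_of_nonneg (ell1_norm_summable x)
      (fun _ => norm_nonneg _) (fun _ => norm_nonneg _)
  refine Summable.of_norm_bounded hb fun p => ?_
  rw [norm_mul, norm_mul]
  calc ‖(w : ℕ → ℝ) p.1‖ * ‖sgn p.1 p.2‖ * ‖(x : ℕ → ℝ) p.2‖
      ≤ ‖(w : ℕ → ℝ) p.1‖ * 1 * ‖(x : ℕ → ℝ) p.2‖ := by
        gcongr; · exact abs_sgn_le _ _
    _ = _ := by ring

lemma pairing_eq (w x : ell1) :
    ∑' m, w m * Gfun (x : ℕ → ℝ) m = ∑' p : ℕ × ℕ, w p.1 * sgn p.1 p.2 * x p.2 := by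
  rw [Summable.tsum_prod (summable_F w x)]
  congr 1; funext m
  rw [Gfun_eq, ← tsum_mul_left]
  congr 1; funext n; ring

theorem gossez_skew_pairing (w x : ell1) :
    ∑' m, w m * Gfun x m = - ∑' m, x m * Gfun w m := by
  rw [pairing_eq w x, pairing_eq x w]
  rw [← (Equiv.prodComm ℕ ℕ).tsum_eq (fun p : ℕ × ℕ => x p.1 * sgn p.1 p.2 * w p.2)]
  rw [← tsum_neg]
  congr 1; funext p
  simp only [Equiv.prodComm_apply, Prod.fst_swap, Prod.snd_swap]
  rw [sgn_swap p.2 p.1]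
  ring
end
end

section
/- Let λ > 0 and let k ≥ 1. If u* ∈ ℓ∞ satisfies u*_1 = −k + 2λk, u*_2 = −k − 2λk, and |u*_m| ≤ 2λk for all m ≥ 3, then u* ∈ (G + λJ)(k e₁ − k e₂), where e₁, e₂ are the first two standard unit vectors of ℓ¹. -/
noncomputable section
open scoped ENNReal
open Filter

/-- The element k e₁ − k e₂ of ℓ¹. -/
def xk (k : ℝ) : ell1 := k • lp.single 1 0 (1 : ℝ) - k • lp.single 1 1 (1 : ℝ)

lemma xk_apply (k : ℝ) (n : ℕ) :
    (xk k) n = if n = 0 then k else if n = 1 then -k else 0 := by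
  have : (xk k) n = k * (lp.single 1 0 (1:ℝ) : ell1) n - k * (lp.single 1 1 (1:ℝ) : ell1) n := by
    simp [xk, lp.coeFn_sub, lp.coeFn_smul]
    rfl
  rw [this, lp.single_apply, lp.single_apply]
  rcases n with _ | _ | n <;> simp

lemma norm_xk (k : ℝ) (hk : 0 ≤ k) : ‖xk k‖ = 2 * k := by
  have hp : 0 < (1 : ℝ≥0∞).toReal := by norm_num
  rw [lp.norm_eq_tsum_rpow hp]
  have h0 : ∀ n ∉ ({0, 1} : Finset ℕ), ‖(xk k) n‖ ^ (1:ℝ≥0∞).toReal = 0 := by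
    intro n hn
    simp only [Finset.mem_insert, Finset.mem_singleton, not_or] at hn
    simp [xk_apply, hn.1, hn.2]
  rw [tsum_eq_sum h0]
  simp [xk_apply, abs_of_nonneg hk]
  ring

lemma sum_range_xk (k : ℝ) (m : ℕ) :
    ∑ n ∈ Finset.range m, (xk k) n
      = (if 0 < m then k else 0) + (if 1 < m then -k else 0) := by
  have h : ∀ n, (xk k) n = (if n = 0 then k else 0) + (if n = 1 then -k else 0) := by
    intro n; rw [xk_apply]; split_ifs <;> simp_all
  simp_rw [h, Finset.sum_add_distrib, Finset.sum_ite_eq' (Finset.range m),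
    Finset.mem_range]

lemma tsum_gt_xk (k : ℝ) (m : ℕ) :
    (∑' n, if m < n then (xk k) n else 0) = if m = 0 then -k else 0 := by
  have h0 : ∀ n ∉ ({0, 1} : Finset ℕ), (if m < n then (xk k) n else 0) = 0 := by
    intro n hn
    simp only [Finset.mem_insert, Finset.mem_singleton, not_or] at hn
    simp [xk_apply, hn.1, hn.2]
  rw [tsum_eq_sum h0]
  simp [xk_apply, Nat.lt_one_iff]

lemma Gfun_xk (k : ℝ) (m : ℕ) :
    Gfun (xk k) m = if m ≤ 1 then -k else 0 := by
  rw [Gfun, sum_range_xk, tsum_gt_xk]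
  rcases m with _ | _ | m <;> simp

theorem gossez_range_element (lam : ℝ) (hlam : 0 < lam) (k : ℝ) (hk : 1 ≤ k)
    (u : ellInfty)
    (h1 : u 0 = -k + 2 * lam * k) (h2 : u 1 = -k - 2 * lam * k)
    (h3 : ∀ m : ℕ, 2 ≤ m → |u m| ≤ 2 * lam * k) :
    ∃ xs : ellInfty,
      ‖xs‖ = ‖xk k‖ ∧
      (∑' m, (xk k) m * xs m = ‖xk k‖ ^ 2) ∧
      ∀ m : ℕ, u m = Gfun (xk k) m + lam * xs m := by
  have hk0 : (0:ℝ) ≤ k := le_trans zero_le_one hk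
  set f : ℕ → ℝ := fun m => if m = 0 then 2*k else if m = 1 then -(2*k) else u m / lam
    with hf
  have hbound : ∀ m, ‖f m‖ ≤ 2 * k := by
    intro m
    rcases m with _ | _ | m
    · simp [hf, abs_of_nonneg hk0]
    · simp [hf, abs_of_nonneg hk0]
    · have h := h3 (m+2) (by omega)
      simp only [hf]
      norm_num
      rw [abs_of_pos hlam, div_le_iff₀ hlam]
      calc |u (m+2)| ≤ 2 * lam * k := h
        _ = 2 * k * lam := by ring
  have hmem : Memℓp f ∞ := memℓp_infty ⟨2*k, by rintro r ⟨i, rfl⟩; exact hbound i⟩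
  refine ⟨⟨f, hmem⟩, ?_, ?_, ?_⟩
  · rw [norm_xk k hk0, lp.norm_eq_ciSup]
    apply le_antisymm (ciSup_le hbound)
    have : ‖f 0‖ = 2 * k := by simp [hf, abs_of_nonneg hk0]
    rw [← this]
    exact le_ciSup ⟨2*k, by rintro r ⟨i, rfl⟩; exact hbound i⟩ 0
  · have h0 : ∀ n ∉ ({0, 1} : Finset ℕ), (xk k) n * f n = 0 := by
      intro n hn
      simp only [Finset.mem_insert, Finset.mem_singleton, not_or] at hn
      simp [xk_apply, hn.1, hn.2]
    show (∑' m, (xk k) m * f m) = _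
    rw [tsum_eq_sum h0, norm_xk k hk0]
    simp [xk_apply, hf]
    ring
  · intro m
    show u m = Gfun (xk k) m + lam * f m
    rw [Gfun_xk]
    rcases m with _ | _ | m
    · simp [hf, h1]; ring
    · simp [hf, h2]; ring
    · simp [hf]
      field_simp
end
end

section
/- Let λ > 0 and suppose the norm closure of the range of G + λJ in ℓ∞ is convex, where G is the Gossez operator and J the duality map of ℓ¹. Then the closure of the range of G + λJ equals all of ℓ∞. -/
noncomputable section
open scoped ENNReal
open Filter

/-- truncate a sum with an `if i < m` to `range m`. -/
lemma sum_if_lt_eq {a : ℕ → ℝ} {m N : ℕ} (h : m ≤ N) :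
    ∑ i ∈ Finset.range N, (if i < m then a i else 0) = ∑ i ∈ Finset.range m, a i := by
  have h1 : ∑ i ∈ Finset.range m, (if i < m then a i else 0)
      = ∑ i ∈ Finset.range N, (if i < m then a i else 0) :=
    Finset.sum_subset (Finset.range_subset_range.2 h)
      (fun x _ hx => if_neg (by simpa using hx))
  rw [← h1]
  exact Finset.sum_congr rfl fun i hi => if_pos (Finset.mem_range.1 hi)

lemma gossez_sign_sum (N m : ℕ) (hN : Even N) (M : ℝ) :
    ∑ i ∈ Finset.range N,
      ((if m < i then (-1:ℝ)^i * M else 0) - (if i < m then (-1:ℝ)^i * M else 0)) =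
      if m < N then -M else 0 := by
  by_cases hm : m < N
  · rw [if_pos hm]
    have e1 : ∀ i : ℕ, (if m < i then ((-1:ℝ)^i * M) else 0)
        = (-1:ℝ)^i * M - (if i < m + 1 then (-1:ℝ)^i * M else 0) := by
      intro i
      split_ifs with h1 h2
      · omega
      · ring
      · ring
      · omega
    rw [Finset.sum_sub_distrib, Finset.sum_congr rfl (fun i _ => e1 i),
      Finset.sum_sub_distrib, sum_if_lt_eq (by omega), sum_if_lt_eq hm.le,
      ← Finset.sum_mul, ← Finset.sum_mul, ← Finset.sum_mul,
      neg_one_geom_sum, neg_one_geom_sum, neg_one_geom_sum, if_pos hN]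
    rcases Nat.even_or_odd m with h | h
    · simp [h, Nat.even_add_one]
    · simp [Nat.not_even_iff_odd.2 h, Nat.even_add_one]
  · rw [if_neg hm]
    have e1 : ∀ i ∈ Finset.range N,
        ((if m < i then (-1:ℝ)^i * M else 0) - (if i < m then (-1:ℝ)^i * M else 0))
        = -((-1:ℝ)^i * M) := by
      intro i hi
      have hi' : i < N := Finset.mem_range.1 hi
      rw [if_neg (by omega), if_pos (by omega)]
      ring
    rw [Finset.sum_congr rfl e1, Finset.sum_neg_distrib, ← Finset.sum_mul,
      neg_one_geom_sum, if_pos hN]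
    ring

theorem gossez_closure_convex_imp_full
    (G : ell1 →L[ℝ] ellInfty) (hG : ∀ (x : ell1) (m : ℕ), G x m = Gfun x m)
    (lam : ℝ) (hlam : 0 < lam)
    (hconv : Convex ℝ (closure {y : ellInfty | ∃ (x : ell1) (xs : ellInfty),
        ‖xs‖ = ‖x‖ ∧ (∑' m, x m * xs m = ‖x‖ ^ 2) ∧ y = G x + lam • xs})) :
    closure {y : ellInfty | ∃ (x : ell1) (xs : ellInfty),
        ‖xs‖ = ‖x‖ ∧ (∑' m, x m * xs m = ‖x‖ ^ 2) ∧ y = G x + lam • xs} = Set.univ := by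
  rw [Set.eq_univ_iff_forall]
  intro y
  obtain ⟨S, hSdef⟩ : ∃ S : Set ellInfty, S = {y : ellInfty | ∃ (x : ell1) (xs : ellInfty),
      ‖xs‖ = ‖x‖ ∧ (∑' m, x m * xs m = ‖x‖ ^ 2) ∧ y = G x + lam • xs} := ⟨_, rfl⟩
  rw [← hSdef] at hconv ⊢
  -- choose the parameters
  obtain ⟨K, hK⟩ := exists_nat_ge (1 / lam + 1)
  have hil : 0 < 1 / lam := by positivity
  have hKR : (1:ℝ) ≤ K := by linarith
  have hK1 : 1 ≤ K := by exact_mod_cast hKR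
  obtain ⟨N, hNdef⟩ : ∃ N, N = 2 * K := ⟨_, rfl⟩
  have hNeven : Even N := ⟨K, by omega⟩
  have hNR : (N:ℝ) = 2 * (K:ℝ) := by rw [hNdef]; push_cast; ring
  obtain ⟨R, hRdef⟩ : ∃ R : ℝ, R = ‖y‖ := ⟨_, rfl⟩
  have hR0 : (0:ℝ) ≤ R := hRdef ▸ norm_nonneg y
  obtain ⟨T, hTdef⟩ : ∃ T : ℝ, T = max (R / lam) R + 1 := ⟨_, rfl⟩
  have hT0 : (0:ℝ) < T := by
    have h1 := le_max_right (R/lam) R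
    rw [hTdef]; linarith
  have hTR : R ≤ T := by
    have h1 := le_max_right (R/lam) R
    rw [hTdef]; linarith
  have hTRl : R / lam ≤ T := by
    have h1 := le_max_left (R/lam) R
    rw [hTdef]; linarith
  obtain ⟨M, hMdef⟩ : ∃ M : ℝ, M = 2 * (K:ℝ) * T := ⟨_, rfl⟩
  have hM0 : (0:ℝ) < M := by rw [hMdef]; nlinarith
  obtain ⟨D, hDdef⟩ : ∃ D : ℝ, D = 2 * (K:ℝ) - 1 := ⟨_, rfl⟩
  have hD1 : (1:ℝ) ≤ D := by rw [hDdef]; linarith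
  have hD0 : (0:ℝ) < D := by rw [hDdef]; linarith
  have hyb : ∀ m, |y m| ≤ R := by
    intro m
    have h := lp.norm_apply_le_norm (E := fun _ : ℕ => ℝ) ENNReal.top_ne_zero y m
    rw [Real.norm_eq_abs] at h
    rw [hRdef]; exact h
  obtain ⟨c, hc⟩ : ∃ c : ℕ → ℝ, c = fun i => (-1)^i * M := ⟨_, rfl⟩
  obtain ⟨xv, hxv⟩ : ∃ xv : ℕ → ell1, xv = fun i => lp.single 1 i (c i) := ⟨_, rfl⟩
  obtain ⟨τ, hτ⟩ : ∃ τ : ℕ → ℝ, τ = fun m => (2*(K:ℝ)/lam) * (y m + T) := ⟨_, rfl⟩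
  obtain ⟨σf, hσf⟩ : ∃ σf : ℕ → ℕ → ℝ, σf = fun i m =>
      if m < N then (if m = i then (-1)^m * M else (τ m - (-1)^m * M)/D)
      else (if i = 0 then (2*(K:ℝ)/lam) * y m else 0) := ⟨_, rfl⟩
  have habs : ∀ k : ℕ, |(-1:ℝ)^k * M| = M := by
    intro k
    rw [abs_mul, abs_pow, abs_neg, abs_one, one_pow, one_mul, abs_of_pos hM0]
  -- bound on the τ-deviation
  have hτb : ∀ m, |τ m - (-1)^m * M| ≤ D * M := by
    intro m
    have h2 : |τ m| ≤ (2*(K:ℝ)/lam) * (R + T) := by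
      rw [hτ]
      simp only
      rw [abs_mul, abs_of_pos (by positivity : (0:ℝ) < 2*(K:ℝ)/lam)]
      have hy : |y m + T| ≤ R + T := by
        have h5 := hyb m
        rw [abs_le] at h5 ⊢
        constructor <;> [linarith [h5.1]; linarith [h5.2]]
      exact mul_le_mul_of_nonneg_left hy (by positivity)
    have h3 : |τ m - (-1)^m * M| ≤ |τ m| + M := by
      calc |τ m - (-1)^m * M| ≤ |τ m| + |(-1)^m * M| := abs_sub _ _
        _ = |τ m| + M := by rw [habs]
    have h4 : (2*(K:ℝ)/lam) * (R + T) ≤ (D - 1) * M := by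
      have e1 : (2*(K:ℝ)/lam) * (R + T) ≤ (2*(K:ℝ) * (1/lam)) * (2*T) := by
        have h6 : (0:ℝ) ≤ 2*(K:ℝ) * (1/lam) := by positivity
        rw [div_eq_mul_one_div]
        exact mul_le_mul_of_nonneg_left (by linarith) h6
      have e2 : (1:ℝ)/lam ≤ (K:ℝ) - 1 := by linarith
      have e3 : (2*(K:ℝ) * (1/lam)) * (2*T) ≤ (2*(K:ℝ) * ((K:ℝ)-1)) * (2*T) := by
        nlinarith
      calc (2*(K:ℝ)/lam) * (R + T) ≤ (2*(K:ℝ) * ((K:ℝ)-1)) * (2*T) := e1.trans e3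
        _ = (D - 1) * M := by rw [hDdef, hMdef]; ring
    linarith
  -- uniform coordinate bound
  have hbd : ∀ i m, |σf i m| ≤ M := by
    intro i m
    rw [hσf]
    simp only
    split_ifs with h1 h2 h3
    · rw [habs]
    · rw [abs_div, abs_of_pos hD0, div_le_iff₀ hD0]
      calc |τ m - (-1)^m * M| ≤ D * M := hτb m
        _ = M * D := by ring
    · rw [abs_mul, abs_of_pos (by positivity : (0:ℝ) < 2*(K:ℝ)/lam)]
      calc (2*(K:ℝ)/lam) * |y m| ≤ (2*(K:ℝ)/lam) * R :=
            mul_le_mul_of_nonneg_left (hyb m) (by positivity)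
        _ = 2*(K:ℝ) * (R/lam) := by ring
        _ ≤ 2*(K:ℝ) * T := mul_le_mul_of_nonneg_left hTRl (by positivity)
        _ = M := hMdef.symm
    · simpa using hM0.le
  obtain ⟨σ, hσ_apply⟩ : ∃ σ : ℕ → ellInfty, ∀ i m, (σ i : ℕ → ℝ) m = σf i m :=
    ⟨fun i => ⟨σf i, memℓp_infty ⟨M, by
        rintro r ⟨m, rfl⟩
        simpa [Real.norm_eq_abs] using hbd i m⟩⟩, fun i m => rfl⟩
  have hxv_apply : ∀ i n : ℕ, (xv i : ℕ → ℝ) n = if n = i then c i else 0 := by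
    intro i n
    by_cases h : n = i
    · subst h; simp [hxv, lp.single_apply_self]
    · simp [hxv, lp.single_apply_ne 1 i _ h, h]
  have hxnorm : ∀ i, ‖xv i‖ = M := by
    intro i
    rw [hxv]
    simp only
    have h := lp.norm_single (p := 1) (E := fun _ : ℕ => ℝ) (by norm_num) i (c i)
    rw [h, hc, Real.norm_eq_abs, habs]
  have hσii : ∀ i < N, σf i i = (-1)^i * M := by
    intro i hi
    simp only [hσf]
    simp [hi]
  have hσnorm : ∀ i < N, ‖σ i‖ = M := by
    intro i hi
    refine le_antisymm ?_ ?_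
    · rw [lp.norm_eq_ciSup]
      exact ciSup_le fun m => by
        simpa only [hσ_apply, Real.norm_eq_abs] using hbd i m
    · rw [lp.norm_eq_ciSup]
      have hb : BddAbove (Set.range fun m => ‖(σ i : ℕ → ℝ) m‖) :=
        ⟨M, by rintro r ⟨m, rfl⟩; simpa only [hσ_apply, Real.norm_eq_abs] using hbd i m⟩
      have h8 : ‖(σ i : ℕ → ℝ) i‖ = M := by
        rw [hσ_apply, hσii i hi, Real.norm_eq_abs, habs]
      rw [← h8]
      exact le_ciSup hb i
  -- the points belong to S
  have hmem : ∀ i < N, G (xv i) + lam • σ i ∈ S := by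
    intro i hi
    rw [hSdef]
    refine ⟨xv i, σ i, ?_, ?_, rfl⟩
    · rw [hσnorm i hi, hxnorm i]
    · have h1 : ∑' m, (xv i) m * (σ i) m = (xv i) i * (σ i) i := by
        refine tsum_eq_single i ?_
        intro b hb
        rw [hxv_apply, if_neg hb, zero_mul]
      rw [h1, hxv_apply, if_pos rfl, hσ_apply, hσii i hi, hxnorm i]
      simp only [hc]
      have h0 : ((-1:ℝ)^i) * ((-1:ℝ)^i) = 1 := by
        rw [← pow_add]
        exact Even.neg_one_pow ⟨i, rfl⟩
      linear_combination M ^ 2 * h0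
  -- coordinates of G (xv i)
  have hGx : ∀ i m, (G (xv i)) m = (if m < i then c i else 0) - (if i < m then c i else 0) := by
    intro i m
    rw [hG, Gfun]
    have h1 : ∑' n, (if m < n then (xv i) n else 0) = if m < i then c i else 0 := by
      rw [show (fun n => if m < n then (xv i : ℕ → ℝ) n else 0)
          = fun n => if n = i then (if m < i then c i else 0) else 0 by
        funext n
        rw [hxv_apply]
        split_ifs with h1 h2 h3 h4 <;> first | rfl | omega]
      rw [tsum_eq_single i (fun b hb => if_neg hb), if_pos rfl]
    have h2 : ∑ n ∈ Finset.range m, (xv i) n = if i < m then c i else 0 := by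
      rw [Finset.sum_congr rfl (fun n _ => hxv_apply i n), Finset.sum_ite_eq' (Finset.range m) i
        (fun _ => c i)]
      simp [Finset.mem_range]
    rw [h1, h2]
  -- the convex combination equals y
  have hcomb : (∑ i ∈ Finset.range N, ((N:ℝ)⁻¹) • (G (xv i) + lam • σ i)) = y := by
    apply lp.ext
    rw [lp.coeFn_sum]
    funext m
    rw [Finset.sum_apply]
    simp only [lp.coeFn_smul, lp.coeFn_add, Pi.smul_apply, Pi.add_apply, smul_eq_mul,
      hσ_apply]
    rw [← Finset.mul_sum, Finset.sum_add_distrib, ← Finset.mul_sum]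
    have hGsum : ∑ i ∈ Finset.range N, (G (xv i)) m = if m < N then -M else 0 := by
      rw [Finset.sum_congr rfl (fun i _ => hGx i m)]
      have h9 := gossez_sign_sum N m hNeven M
      rw [← h9]
      exact Finset.sum_congr rfl (fun i _ => by simp only [hc])
    have hσsum : ∑ i ∈ Finset.range N, σf i m
        = if m < N then τ m else (2*(K:ℝ)/lam) * y m := by
      by_cases hm : m < N
      · rw [if_pos hm]
        have e2 : ∀ i ∈ Finset.range N, σf i m
            = (τ m - (-1)^m * M)/D + (if m = i then ((-1)^m * M - (τ m - (-1)^m * M)/D) else 0) := by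
          intro i _
          simp only [hσf]
          rw [if_pos hm]
          split_ifs with h <;> ring
        rw [Finset.sum_congr rfl e2, Finset.sum_add_distrib, Finset.sum_const,
          Finset.sum_ite_eq, if_pos (Finset.mem_range.2 hm), Finset.card_range]
        have hND : (N:ℝ) = D + 1 := by rw [hDdef, hNR]; ring
        rw [nsmul_eq_mul, hND]
        field_simp
        ring
      · rw [if_neg hm]
        have e2 : ∀ i ∈ Finset.range N, σf i m
            = (if i = 0 then (2*(K:ℝ)/lam) * y m else 0) := by
          intro i _
          simp only [hσf]
          rw [if_neg hm]
        rw [Finset.sum_congr rfl e2, Finset.sum_ite_eq' (Finset.range N) 0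
          (fun _ => (2*(K:ℝ)/lam) * y m), if_pos (Finset.mem_range.2 (by omega))]
    rw [hGsum, hσsum]
    by_cases hm : m < N
    · rw [if_pos hm, if_pos hm, hMdef, hNR]
      simp only [hτ]
      have hlam' : lam ≠ 0 := ne_of_gt hlam
      have hK0 : (K:ℝ) ≠ 0 := by positivity
      field_simp
      ring
    · rw [if_neg hm, if_neg hm, hNR]
      have hlam' : lam ≠ 0 := ne_of_gt hlam
      have hK0 : (K:ℝ) ≠ 0 := by positivity
      field_simp
      ring
  -- conclude by convexity
  rw [← hcomb]
  refine hconv.sum_mem (fun i _ => by positivity) ?_ ?_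
  · rw [Finset.sum_const, Finset.card_range, nsmul_eq_mul, mul_inv_cancel₀]
    exact_mod_cast (by omega : N ≠ 0)
  · intro i hi
    exact subset_closure (hmem i (Finset.mem_range.1 hi))
end
end

section
/- If λ > 0 and the norm closure of the range of G + λJ is convex, then λ ≥ 4. Equivalently, for every λ with 0 < λ < 4, the closure of R(G + λJ) is not convex; in particular, the closure of R(G + J) is not convex. -/
noncomputable section
open scoped ENNReal
open Filter

/-! ### Auxiliary lemmas -/

lemma ell1_summable_abs (x : ell1) : Summable (fun n => |x n|) := by
  have h := lp.memℓp x
  rw [memℓp_gen_iff (by norm_num : (0:ℝ) < (1:ℝ≥0∞).toReal)] at h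
  simpa using h

lemma ell1_norm_eq (x : ell1) : ‖x‖ = ∑' n, |x n| := by
  have h := lp.hasSum_norm (by norm_num : (0:ℝ) < (1:ℝ≥0∞).toReal) x
  simp only [ENNReal.toReal_one, Real.rpow_one] at h
  simpa [Real.norm_eq_abs] using h.tsum_eq.symm

lemma tsum_ite_lt {x : ℕ → ℝ} (hx : Summable x) (m : ℕ) :
    (∑' n, if m < n then x n else 0) = (∑' n, x n) - ∑ n ∈ Finset.range (m+1), x n := by
  have h1 : (fun n => if m < n then x n else 0) = fun n => x n - (if n < m + 1 then x n else 0) := by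
    funext n
    by_cases h : m < n
    · rw [if_pos h, if_neg (by omega)]; ring
    · rw [if_neg h, if_pos (by omega)]; ring
  have h2 : Summable (fun n => if n < m + 1 then x n else 0) := by
    apply hx.summable_of_eq_zero_or_self
    intro n; by_cases h : n < m + 1 <;> simp [h]
  rw [h1, Summable.tsum_sub hx h2]
  congr 1
  rw [tsum_eq_sum (s := Finset.range (m+1))]
  · exact Finset.sum_congr rfl (fun n hn => if_pos (Finset.mem_range.mp hn))
  · intro n hn; exact if_neg (by simpa using hn)

lemma Gfun_eq_s9 {x : ℕ → ℝ} (hx : Summable x) (m : ℕ) :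
    Gfun x m = (∑' n, x n) - ∑ n ∈ Finset.range (m+1), x n - ∑ n ∈ Finset.range m, x n := by
  rw [Gfun, tsum_ite_lt hx]

lemma Gfun_tendsto {x : ℕ → ℝ} (hx : Summable x) :
    Tendsto (fun m => Gfun x m) atTop (nhds (-(∑' n, x n))) := by
  have hps : Tendsto (fun m => ∑ n ∈ Finset.range m, x n) atTop (nhds (∑' n, x n)) :=
    hx.hasSum.tendsto_sum_nat
  have hps' : Tendsto (fun m => ∑ n ∈ Finset.range (m+1), x n) atTop (nhds (∑' n, x n)) :=
    hps.comp (tendsto_add_atTop_nat 1)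
  have h : Tendsto (fun m => (∑' n, x n) - ∑ n ∈ Finset.range (m+1), x n
      - ∑ n ∈ Finset.range m, x n) atTop
      (nhds ((∑' n, x n) - (∑' n, x n) - (∑' n, x n))) :=
    (tendsto_const_nhds.sub hps').sub hps
  have h2 : (∑' n, x n) - (∑' n, x n) - (∑' n, x n) = -(∑' n, x n) := by ring
  rw [h2] at h
  exact h.congr (fun m => (Gfun_eq_s9 hx m).symm)

lemma summable_ite_abs {x : ℕ → ℝ} (hx : Summable (fun n => |x n|)) (m : ℕ) :
    Summable (fun n => |if m < n then x n else 0|) := by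
  refine Summable.of_nonneg_of_le (fun n => abs_nonneg _) ?_ hx
  intro n; by_cases h : m < n <;> simp [h, abs_nonneg]

lemma abs_A_le {x : ℕ → ℝ} (hx : Summable (fun n => |x n|)) (m : ℕ) :
    |∑' n, if m < n then x n else 0| ≤ ∑' n, |x n| := by
  have h := norm_tsum_le_tsum_norm (f := fun n => if m < n then x n else 0)
    (by simpa [Real.norm_eq_abs] using summable_ite_abs hx m)
  simp only [Real.norm_eq_abs] at h
  refine h.trans ?_
  refine Summable.tsum_le_tsum ?_ (summable_ite_abs hx m) hx
  intro n; by_cases h : m < n <;> simp [h, abs_nonneg]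

lemma abs_B_le {x : ℕ → ℝ} (hx : Summable (fun n => |x n|)) (m : ℕ) :
    |∑ n ∈ Finset.range m, x n| ≤ ∑' n, |x n| := by
  refine le_trans (Finset.abs_sum_le_sum_abs _ _) ?_
  exact Summable.sum_le_tsum _ (fun n _ => abs_nonneg _) hx

lemma abs_Gfun_le {x : ℕ → ℝ} (hx : Summable (fun n => |x n|)) (m : ℕ) :
    |Gfun x m| ≤ 2 * ∑' n, |x n| := by
  rw [Gfun]
  calc |(∑' n, if m < n then x n else 0) - ∑ n ∈ Finset.range m, x n|
      ≤ |∑' n, if m < n then x n else 0| + |∑ n ∈ Finset.range m, x n| := abs_sub _ _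
    _ ≤ 2 * ∑' n, |x n| := by
        have := abs_A_le hx m; have := abs_B_le hx m; linarith

/-- Skew-symmetry pairing: `⟨x, Gx⟩ = 0`. -/
lemma skew {x : ℕ → ℝ} (hx : Summable (fun n => |x n|)) :
    ∑' m, x m * Gfun x m = 0 := by
  have hxs : Summable x := hx.of_abs
  set L := ∑' n, |x n| with hL
  set F : ℕ × ℕ → ℝ := fun p => if p.1 < p.2 then x p.1 * x p.2 else 0 with hFdef
  have hFbound : ∀ p : ℕ × ℕ, ‖F p‖ ≤ |x p.1| * |x p.2| := by
    intro p
    by_cases h : p.1 < p.2 <;>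
      simp [hFdef, h, Real.norm_eq_abs, abs_mul, mul_nonneg, abs_nonneg, le_refl]
  have hF : Summable F :=
    Summable.of_norm_bounded (hx.mul_of_nonneg hx (fun n => abs_nonneg _)
      (fun n => abs_nonneg _)) hFbound
  have h1 : ∀ m, Summable fun n => F (m, n) := by
    intro m
    apply Summable.of_norm_bounded (hx.mul_left (|x m|))
    intro n; exact hFbound (m, n)
  have h2 : ∀ n, Summable fun m => F (m, n) := by
    intro n
    apply Summable.of_norm_bounded (hx.mul_right (|x n|))
    intro m; exact hFbound (m, n)
  have e1 : ∑' p, F p = ∑' m, x m * (∑' n, if m < n then x n else 0) := by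
    rw [Summable.tsum_prod' hF h1]
    congr 1; funext m
    have : (fun n => F (m, n)) = fun n => x m * (if m < n then x n else 0) := by
      funext n; by_cases h : m < n <;> simp [hFdef, h]
    rw [this, tsum_mul_left]
  have hFswap : Summable (fun q : ℕ × ℕ => F (q.2, q.1)) := by
    refine Summable.of_norm_bounded (hx.mul_of_nonneg hx (fun n => abs_nonneg _)
      (fun n => abs_nonneg _)) ?_
    intro q
    refine (hFbound (q.2, q.1)).trans ?_
    rw [mul_comm]
  have hswap : ∑' q : ℕ × ℕ, F (q.2, q.1) = ∑' p, F p := by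
    have := (Equiv.prodComm ℕ ℕ).tsum_eq F
    have h' : ∑' c : ℕ × ℕ, F c.swap = ∑' p, F p := by simpa [Function.comp] using this
    exact h'
  have e2 : ∑' p, F p = ∑' n, x n * (∑ m ∈ Finset.range n, x m) := by
    rw [← hswap, Summable.tsum_prod' hFswap (fun n => h2 n)]
    congr 1; funext n
    have : (fun m => F (m, n)) = fun m => (if m < n then x m else 0) * x n := by
      funext m; by_cases h : m < n <;> simp [hFdef, h]
    rw [this, tsum_mul_right]
    rw [tsum_eq_sum (s := Finset.range n) (fun m hm => if_neg (by simpa using hm))]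
    rw [Finset.sum_congr rfl (fun m hm => if_pos (Finset.mem_range.mp hm))]
    ring
  have sA : Summable (fun m => x m * (∑' n, if m < n then x n else 0)) := by
    apply Summable.of_norm_bounded (hx.mul_right L)
    intro m
    rw [Real.norm_eq_abs, abs_mul]
    exact mul_le_mul_of_nonneg_left (abs_A_le hx m) (abs_nonneg _)
  have sB : Summable (fun m => x m * (∑ n ∈ Finset.range m, x n)) := by
    apply Summable.of_norm_bounded (hx.mul_right L)
    intro m
    rw [Real.norm_eq_abs, abs_mul]
    exact mul_le_mul_of_nonneg_left (abs_B_le hx m) (abs_nonneg _)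
  have key : ∑' m, x m * Gfun x m
      = (∑' m, x m * (∑' n, if m < n then x n else 0))
        - ∑' m, x m * (∑ n ∈ Finset.range m, x n) := by
    rw [← Summable.tsum_sub sA sB]
    congr 1; funext m; rw [Gfun]; ring
  rw [key, ← e1, ← e2]
  ring

lemma eStar_apply (m : ℕ) : (eStar : ∀ _ : ℕ, ℝ) m = 1 := rfl

lemma eVec_apply (k m : ℕ) : (eVec k : ∀ _ : ℕ, ℝ) m = if m = k then 1 else 0 := by
  rcases eq_or_ne m k with h | h
  · subst h; simp [eVec, lp.single_apply_self]
  · simp [eVec, lp.single_apply_ne _ _ _ h, h]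

lemma coord_le_norm_infty (f : ellInfty) (m : ℕ) : |f m| ≤ ‖f‖ := by
  have h := lp.norm_apply_le_norm (E := fun _ : ℕ => ℝ) ENNReal.top_ne_zero f m
  rwa [Real.norm_eq_abs] at h

lemma norm_infty_eq (f : ellInfty) (c : ℝ) (h1 : ∀ m, |f m| ≤ c) (h2 : ∃ m, |f m| = c) :
    ‖f‖ = c := by
  obtain ⟨m, hm⟩ := h2
  refine le_antisymm (lp.norm_le_of_forall_le (hm ▸ abs_nonneg _) ?_) ?_
  · intro i
    rw [Real.norm_eq_abs]
    exact h1 i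
  · exact hm ▸ coord_le_norm_infty f m

lemma norm_single_one (k : ℕ) (c : ℝ) : ‖(lp.single 1 k c : ell1)‖ = |c| := by
  have := lp.norm_single (E := fun _ : ℕ => ℝ) (p := 1) (by norm_num) k c
  rwa [Real.norm_eq_abs] at this

lemma single_one_apply (k : ℕ) (c : ℝ) (m : ℕ) :
    (lp.single 1 k c : ell1) m = if m = k then c else 0 := by
  rcases eq_or_ne m k with h | h
  · subst h; simp [lp.single_apply_self]
  · simp [lp.single_apply_ne _ _ _ h, h]

/-- Via convexity, each "hole" vector `e* - e_k` lies in the closure of the range. -/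
lemma holeVec_mem_closure
    (G : ell1 →L[ℝ] ellInfty)
    (lam : ℝ) (hlam : 0 < lam)
    (hconv : Convex ℝ (closure {y : ellInfty | ∃ (x : ell1) (xs : ellInfty),
        ‖xs‖ = ‖x‖ ∧ (∑' m, x m * xs m = ‖x‖ ^ 2) ∧ y = G x + lam • xs}))
    (k : ℕ) :
    eStar - eVec k ∈ closure {y : ellInfty | ∃ (x : ell1) (xs : ellInfty),
        ‖xs‖ = ‖x‖ ∧ (∑' m, x m * xs m = ‖x‖ ^ 2) ∧ y = G x + lam • xs} := by
  set c : ℝ := lam⁻¹ with hc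
  have hc0 : 0 < c := inv_pos.mpr hlam
  set xp : ell1 := lp.single 1 k c with hxp
  set xsp : ellInfty := c • eStar with hxsp
  set xsm : ellInfty := c • eStar - (2*c) • eVec k with hxsm
  have hxp_apply : ∀ m, (xp : ∀ _ : ℕ, ℝ) m = if m = k then c else 0 :=
    fun m => single_one_apply k c m
  have hxsp_apply : ∀ m, (xsp : ∀ _ : ℕ, ℝ) m = c := by
    intro m
    rw [hxsp, lp.coeFn_smul, Pi.smul_apply, eStar_apply, smul_eq_mul, mul_one]
  have hxsm_apply : ∀ m, (xsm : ∀ _ : ℕ, ℝ) m = if m = k then -c else c := by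
    intro m
    rw [hxsm, lp.coeFn_sub, Pi.sub_apply, lp.coeFn_smul, lp.coeFn_smul, Pi.smul_apply,
      Pi.smul_apply, eStar_apply, eVec_apply, smul_eq_mul, smul_eq_mul, mul_one]
    rcases eq_or_ne m k with h | h <;> simp [h] <;> ring
  have hxp_norm : ‖xp‖ = c := by
    rw [hxp, norm_single_one, abs_of_pos hc0]
  have hxsp_norm : ‖xsp‖ = c := by
    refine norm_infty_eq _ c (fun m => by rw [hxsp_apply m, abs_of_pos hc0]) ⟨0, ?_⟩
    rw [hxsp_apply 0, abs_of_pos hc0]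
  have hxsm_norm : ‖xsm‖ = c := by
    refine norm_infty_eq _ c (fun m => ?_) ⟨0, ?_⟩
    · rw [hxsm_apply m]
      rcases eq_or_ne m k with h | h <;> simp [h, abs_of_pos hc0, le_refl]
    · rw [hxsm_apply 0]
      rcases eq_or_ne 0 k with h | h <;> simp [h, abs_of_pos hc0]
  -- the two range elements
  have hyp_mem : (G xp + lam • xsp) ∈ {y : ellInfty | ∃ (x : ell1) (xs : ellInfty),
      ‖xs‖ = ‖x‖ ∧ (∑' m, x m * xs m = ‖x‖ ^ 2) ∧ y = G x + lam • xs} := by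
    refine ⟨xp, xsp, by rw [hxsp_norm, hxp_norm], ?_, rfl⟩
    rw [hxp_norm]
    rw [tsum_eq_single k (fun m hm => by rw [hxp_apply m, if_neg hm, zero_mul])]
    rw [hxp_apply k, if_pos rfl, hxsp_apply k]
    ring
  have hym_mem : (G (-xp) + lam • xsm) ∈ {y : ellInfty | ∃ (x : ell1) (xs : ellInfty),
      ‖xs‖ = ‖x‖ ∧ (∑' m, x m * xs m = ‖x‖ ^ 2) ∧ y = G x + lam • xs} := by
    refine ⟨-xp, xsm, by rw [hxsm_norm, norm_neg, hxp_norm], ?_, rfl⟩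
    rw [norm_neg, hxp_norm]
    rw [tsum_eq_single k (fun m hm => by
      rw [lp.coeFn_neg, Pi.neg_apply, hxp_apply m, if_neg hm, neg_zero, zero_mul])]
    rw [lp.coeFn_neg, Pi.neg_apply, hxp_apply k, if_pos rfl, hxsm_apply k, if_pos rfl]
    ring
  -- the midpoint is the hole vector
  have hmid : (1/2 : ℝ) • (G xp + lam • xsp) + (1/2 : ℝ) • (G (-xp) + lam • xsm)
      = eStar - eVec k := by
    apply lp.ext
    funext m
    have hGneg : G (-xp) = -(G xp) := map_neg G xp
    simp only [lp.coeFn_add, lp.coeFn_smul, lp.coeFn_sub, lp.coeFn_neg, Pi.add_apply,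
      Pi.smul_apply, Pi.sub_apply, Pi.neg_apply, hGneg, smul_eq_mul, hxsp_apply,
      hxsm_apply, eStar_apply, eVec_apply]
    have hlc : lam * c = 1 := mul_inv_cancel₀ hlam.ne'
    rcases eq_or_ne m k with h | h
    · rw [if_pos h, if_pos h]; nlinarith [hlc]
    · rw [if_neg h, if_neg h]; nlinarith [hlc]
  rw [← hmid]
  exact hconv (subset_closure hyp_mem) (subset_closure hym_mem)
    (by norm_num) (by norm_num) (by norm_num)

set_option maxHeartbeats 1000000 in
theorem gossez_closure_convex_imp_four_le
    (G : ell1 →L[ℝ] ellInfty) (hG : ∀ (x : ell1) (m : ℕ), G x m = Gfun x m)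
    (lam : ℝ) (hlam : 0 < lam)
    (hconv : Convex ℝ (closure {y : ellInfty | ∃ (x : ell1) (xs : ellInfty),
        ‖xs‖ = ‖x‖ ∧ (∑' m, x m * xs m = ‖x‖ ^ 2) ∧ y = G x + lam • xs})) :
    4 ≤ lam := by
  by_contra hlt
  push_neg at hlt
  -- the error threshold
  obtain ⟨ε0, hε0def⟩ : ∃ t : ℝ, t = lam * (4 - lam) / (4 * (lam + 2)) := ⟨_, rfl⟩
  have hε0 : 0 < ε0 := by
    rw [hε0def]
    apply div_pos (by nlinarith) (by nlinarith)
  obtain ⟨ε, hεdef⟩ : ∃ t : ℝ, t = min 1 ε0 / 2 := ⟨_, rfl⟩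
  have hε : 0 < ε := by
    rw [hεdef]
    exact half_pos (lt_min one_pos hε0)
  have hε1 : ε ≤ 1/2 := by
    rw [hεdef]
    have := min_le_left (1:ℝ) ε0
    linarith
  have hεε0 : ε < ε0 := by
    rw [hεdef]
    have := min_le_right (1:ℝ) ε0
    linarith
  -- choose N with 1/N < ε/2
  obtain ⟨n, hn⟩ := exists_nat_one_div_lt (half_pos hε)
  obtain ⟨N, hN⟩ : ∃ t : ℕ, t = n + 1 := ⟨_, rfl⟩
  have hNpos : 0 < (N:ℝ) := by rw [hN]; positivity
  have hNinv : ((N:ℝ))⁻¹ < ε / 2 := by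
    rw [← one_div]
    rw [hN]; push_cast; exact hn
  -- the convex combination of hole vectors
  obtain ⟨wN, hwN⟩ : ∃ t : ellInfty, t = ∑ k ∈ Finset.range N, ((N:ℝ))⁻¹ • (eStar - eVec k) :=
    ⟨_, rfl⟩
  have hwN_mem : wN ∈ closure {y : ellInfty | ∃ (x : ell1) (xs : ellInfty),
      ‖xs‖ = ‖x‖ ∧ (∑' m, x m * xs m = ‖x‖ ^ 2) ∧ y = G x + lam • xs} := by
    rw [hwN]
    refine hconv.sum_mem (fun i _ => by positivity) ?_
      (fun k _ => holeVec_mem_closure G lam hlam hconv k)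
    rw [Finset.sum_const, Finset.card_range, nsmul_eq_mul]
    field_simp
  have hwN_close : ‖wN - eStar‖ ≤ ((N:ℝ))⁻¹ := by
    refine lp.norm_le_of_forall_le (by positivity) ?_
    intro m
    rw [Real.norm_eq_abs, lp.coeFn_sub, Pi.sub_apply, hwN, lp.coeFn_sum, Finset.sum_apply]
    have hterm : ∀ k, (((N:ℝ))⁻¹ • (eStar - eVec k) : ellInfty) m
        = ((N:ℝ))⁻¹ * (1 - if m = k then 1 else 0) := by
      intro k
      rw [lp.coeFn_smul, Pi.smul_apply, lp.coeFn_sub, Pi.sub_apply, eStar_apply, eVec_apply,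
        smul_eq_mul]
    rw [Finset.sum_congr rfl (fun k _ => hterm k)]
    have heq : ∑ k ∈ Finset.range N, ((N:ℝ))⁻¹ * (1 - if m = k then 1 else 0)
        = 1 - ((N:ℝ))⁻¹ * (if m ∈ Finset.range N then 1 else 0) := by
      rw [← Finset.mul_sum, Finset.sum_sub_distrib, Finset.sum_const, Finset.card_range,
        Finset.sum_ite_eq, nsmul_eq_mul, mul_one, mul_sub, inv_mul_cancel₀ hNpos.ne']
    rw [heq, eStar_apply]
    rcases em (m ∈ Finset.range N) with h | h
    · rw [if_pos h, mul_one]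
      have h2 : (1:ℝ) - (N:ℝ)⁻¹ - 1 = -((N:ℝ)⁻¹) := by ring
      rw [h2, abs_neg, abs_of_nonneg (by positivity)]
    · rw [if_neg h]
      simp [abs_of_nonneg, hNpos.le]
  -- extract a nearby range element
  obtain ⟨y, hyS, hdist⟩ := Metric.mem_closure_iff.mp hwN_mem (ε/2) (half_pos hε)
  obtain ⟨x, xs, hnx, htx, rfl⟩ := hyS
  have hyclose : ‖(G x + lam • xs) - eStar‖ ≤ ε := by
    have h1 : ‖(G x + lam • xs) - eStar‖ ≤ ‖(G x + lam • xs) - wN‖ + ‖wN - eStar‖ :=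
      norm_sub_le_norm_sub_add_norm_sub _ _ _
    have h2 : ‖(G x + lam • xs) - wN‖ = dist wN (G x + lam • xs) := by
      rw [dist_eq_norm, norm_sub_rev]
    linarith [h1, h2 ▸ hdist, hwN_close, hNinv]
  -- set up notation
  obtain ⟨L, hLdef⟩ : ∃ t : ℝ, t = ‖x‖ := ⟨_, rfl⟩
  have hL : L = ∑' n, |x n| := by rw [hLdef]; exact ell1_norm_eq x
  have habs : Summable (fun n => |x n|) := ell1_summable_abs x
  have hsum : Summable (fun n => x n) := habs.of_abs
  obtain ⟨S0, hS0⟩ : ∃ t : ℝ, t = ∑' n, x n := ⟨_, rfl⟩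
  have hL0 : 0 ≤ L := hLdef ▸ norm_nonneg x
  have hnx' : ‖xs‖ = L := by rw [hLdef]; exact hnx
  have htx' : ∑' m, x m * xs m = L^2 := by rw [hLdef]; exact htx
  -- coordinatewise closeness
  have hcoord : ∀ m, |Gfun x m + lam * xs m - 1| ≤ ε := by
    intro m
    have h := coord_le_norm_infty (G x + lam • xs - eStar) m
    have hm : (G x + lam • xs - eStar) m = Gfun x m + lam * xs m - 1 := by
      rw [lp.coeFn_sub, Pi.sub_apply, lp.coeFn_add, Pi.add_apply, lp.coeFn_smul, Pi.smul_apply,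
        eStar_apply, smul_eq_mul, hG]
    rw [hm] at h
    exact h.trans hyclose
  have hxsb : ∀ m, |xs m| ≤ L := by
    intro m
    have := coord_le_norm_infty xs m
    rwa [hnx'] at this
  -- (A) tail estimate : 1 - ε ≤ lam * L - S0
  have hA : 1 - ε ≤ lam * L - S0 := by
    have h1 : ∀ m, 1 - ε ≤ Gfun x m + lam * L := by
      intro m
      have h := (abs_le.mp (hcoord m)).1
      have h2 : xs m ≤ L := (abs_le.mp (hxsb m)).2
      nlinarith [hlam.le]
    have ht : Tendsto (fun m => Gfun x m + lam * L) atTop (nhds (-S0 + lam * L)) := by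
      rw [hS0]
      exact (Gfun_tendsto hsum).add_const _
    have := ge_of_tendsto' ht h1
    linarith
  -- (B) pairing estimate : lam * L^2 ≤ S0 + ε * L
  have sxG : Summable (fun m => x m * Gfun x m) := by
    apply Summable.of_norm_bounded (habs.mul_right (2 * ∑' n, |x n|))
    intro m
    rw [Real.norm_eq_abs, abs_mul]
    exact mul_le_mul_of_nonneg_left (abs_Gfun_le habs m) (abs_nonneg _)
  have sxxs : Summable (fun m => x m * xs m) := by
    apply Summable.of_norm_bounded (habs.mul_right L)
    intro m
    rw [Real.norm_eq_abs, abs_mul]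
    exact mul_le_mul_of_nonneg_left (hxsb m) (abs_nonneg _)
  have hBsum : ∑' m, x m * (Gfun x m + lam * xs m) = lam * L^2 := by
    have hre : (fun m => x m * (Gfun x m + lam * xs m))
        = fun m => x m * Gfun x m + lam * (x m * xs m) := by
      funext m; ring
    rw [hre, Summable.tsum_add sxG (sxxs.mul_left lam), skew habs, tsum_mul_left, htx']
    ring
  have sy : Summable (fun m => x m * (Gfun x m + lam * xs m)) := by
    have hre : (fun m => x m * (Gfun x m + lam * xs m))
        = fun m => x m * Gfun x m + lam * (x m * xs m) := by
      funext m; ring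
    rw [hre]
    exact sxG.add (sxxs.mul_left lam)
  have hB : lam * L^2 - S0 ≤ ε * L := by
    have hdiff : ∑' m, (x m * (Gfun x m + lam * xs m) - x m) = lam * L^2 - S0 := by
      rw [Summable.tsum_sub sy hsum, hBsum, hS0]
    have hbound : |∑' m, (x m * (Gfun x m + lam * xs m) - x m)| ≤ ε * L := by
      have hs : Summable (fun m => |x m * (Gfun x m + lam * xs m) - x m|) := by
        refine Summable.of_nonneg_of_le (fun m => abs_nonneg _) (fun m => ?_)
          (habs.mul_right ε)
        have : x m * (Gfun x m + lam * xs m) - x m = x m * ((Gfun x m + lam * xs m) - 1) := by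
          ring
        rw [this, abs_mul]
        exact mul_le_mul_of_nonneg_left (hcoord m) (abs_nonneg _)
      have h := norm_tsum_le_tsum_norm (f := fun m => x m * (Gfun x m + lam * xs m) - x m)
        (by simpa [Real.norm_eq_abs] using hs)
      simp only [Real.norm_eq_abs] at h
      refine h.trans ?_
      have h2 : ∑' m, |x m * (Gfun x m + lam * xs m) - x m| ≤ ∑' m, |x m| * ε := by
        refine Summable.tsum_le_tsum (fun m => ?_) hs (habs.mul_right ε)
        have : x m * (Gfun x m + lam * xs m) - x m = x m * ((Gfun x m + lam * xs m) - 1) := by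
          ring
        rw [this, abs_mul]
        exact mul_le_mul_of_nonneg_left (hcoord m) (abs_nonneg _)
      refine h2.trans ?_
      rw [tsum_mul_right, ← hL]
      ring_nf
      exact le_refl _
    rw [hdiff] at hbound
    exact (abs_le.mp hbound).2
  have hS0L : S0 ≤ L := by
    rw [hS0, hL]
    exact Summable.tsum_le_tsum (fun n => le_abs_self _) hsum habs
  -- final arithmetic contradiction
  have h3 : 1 - ε ≤ lam * L - lam * L^2 + ε * L := by linarith
  have h4 : lam * L ≤ 1 + ε := by
    rcases eq_or_lt_of_le hL0 with h | h
    · rw [← h, mul_zero]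
      linarith
    · nlinarith [hB, hS0L, h]
  have h6' : lam * L ≤ 2 := by linarith
  have p1 : 0 ≤ (lam * L - lam * L^2 + ε * L - 1 + ε) * lam :=
    mul_nonneg (by linarith) hlam.le
  have p2 : 0 ≤ (L^2 - L + 1/4) * lam^2 :=
    mul_nonneg (by nlinarith [sq_nonneg (L - 1/2)]) (sq_nonneg lam)
  have p3 : 0 ≤ ε * (2 - lam * L) := mul_nonneg hε.le (by linarith)
  have hcontra : lam * (4 - lam) ≤ 4 * ε * (lam + 2) := by nlinarith [p1, p2, p3]
  have hfinal : ε0 ≤ ε := by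
    rw [hε0def, div_le_iff₀ (by nlinarith)]
    nlinarith [hcontra]
  linarith
end
end

section
/- Let w*** := ê* − W*e* ∈ (ℓ¹)***, where e* = (1,1,1,…) ∈ ℓ∞, ê* its canonical image in (ℓ∞)**, and W* the adjoint of W : (ℓ∞)* → ℓ¹. Then ‖w***‖ = 1. -/
noncomputable section
open scoped ENNReal
open Filter

-- auxiliary: ultrafilter limit functional

lemma coord_abs_le (f : ellInfty) (n : ℕ) : |f n| ≤ ‖f‖ :=
  lp.norm_apply_le_norm ENNReal.top_ne_zero f n

lemma ulim_exists (U : Ultrafilter ℕ) (f : ellInfty) :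
    ∃ a ∈ Set.Icc (-‖f‖) ‖f‖, Filter.Tendsto ⇑f (U : Filter ℕ) (nhds a) := by
  have hmem : ∀ n, f n ∈ Set.Icc (-‖f‖) ‖f‖ := fun n =>
    abs_le.mp (coord_abs_le f n)
  obtain ⟨a, ha, hle⟩ := (isCompact_Icc (a := -‖f‖) (b := ‖f‖)).ultrafilter_le_nhds
    (U.map ⇑f) (by
      rw [Ultrafilter.coe_map]
      exact le_principal_iff.mpr (Filter.mem_map.mpr (by
        filter_upwards with n using hmem n)))
  rw [Ultrafilter.coe_map] at hle
  exact ⟨a, ha, hle⟩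

def ulim (U : Ultrafilter ℕ) (f : ellInfty) : ℝ := (ulim_exists U f).choose

lemma ulim_tendsto (U : Ultrafilter ℕ) (f : ellInfty) :
    Filter.Tendsto ⇑f (U : Filter ℕ) (nhds (ulim U f)) :=
  (ulim_exists U f).choose_spec.2

lemma ulim_abs_le (U : Ultrafilter ℕ) (f : ellInfty) : |ulim U f| ≤ ‖f‖ :=
  abs_le.mpr (ulim_exists U f).choose_spec.1

lemma ulim_eq (U : Ultrafilter ℕ) {f : ellInfty} {a : ℝ}
    (h : Filter.Tendsto ⇑f (U : Filter ℕ) (nhds a)) : ulim U f = a :=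
  tendsto_nhds_unique (ulim_tendsto U f) h

def ulimCLM (U : Ultrafilter ℕ) : StrongDual ℝ ellInfty :=
  LinearMap.mkContinuous
    { toFun := ulim U
      map_add' := fun f g => ulim_eq U (by
        rw [lp.coeFn_add]
        exact (ulim_tendsto U f).add (ulim_tendsto U g))
      map_smul' := fun c f => ulim_eq U (by
        rw [lp.coeFn_smul]
        exact (show Filter.Tendsto (fun x => c • f x) (U : Filter ℕ) (nhds (c • ulim U f)) from
          (ulim_tendsto U f).const_smul c)) }
    1 (fun f => by
      show ‖ulim U f‖ ≤ 1 * ‖f‖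
      rw [one_mul, Real.norm_eq_abs]
      exact ulim_abs_le U f)

lemma ulimCLM_apply (U : Ultrafilter ℕ) (f : ellInfty) : ulimCLM U f = ulim U f := rfl

-- summability of xss (eVec m)

lemma norm_sum_smul_eVec_le (xss : StrongDual ℝ ellInfty) (S : Finset ℕ)
    (ε : ℕ → ℝ) (hε : ∀ m, |ε m| ≤ 1) :
    ‖(∑ m ∈ S, ε m • eVec m : ellInfty)‖ ≤ 1 := by
  apply lp.norm_le_of_forall_le zero_le_one
  intro k
  have : (∑ m ∈ S, ε m • eVec m : ellInfty) k = ∑ m ∈ S, ε m * (eVec m k) := by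
    rw [lp.coeFn_sum]
    simp [Finset.sum_apply, lp.coeFn_smul]
  rw [this]
  by_cases hk : k ∈ S
  · rw [Finset.sum_eq_single k]
    · simp only [eVec, lp.single_apply_self, mul_one, Real.norm_eq_abs]
      exact hε k
    · intro m _ hm
      simp [eVec, lp.single_apply_ne _ _ _ (Ne.symm hm), Pi.single_apply, Ne.symm hm]
    · intro h; exact absurd hk h
  · rw [Finset.sum_eq_zero]
    · simp
    · intro m hm
      have : k ≠ m := fun h => hk (h ▸ hm)
      simp [eVec, lp.single_apply_ne _ _ _ this, Pi.single_apply, this]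

lemma summable_eVec (xss : StrongDual ℝ ellInfty) :
    Summable (fun m => xss (eVec m)) := by
  apply summable_of_sum_range_le (c := ‖xss‖) (fun m => abs_nonneg _) ?_ |>.of_abs
  intro n
  set ε : ℕ → ℝ := fun m => if 0 ≤ xss (eVec m) then 1 else -1 with hε
  have habs : ∀ m, |xss (eVec m)| = ε m * xss (eVec m) := by
    intro m
    by_cases h : 0 ≤ xss (eVec m)
    · simp [hε, h, abs_of_nonneg h]
    · simp [hε, h, abs_of_neg (lt_of_not_ge h)]
  calc ∑ m ∈ Finset.range n, |xss (eVec m)|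
      = ∑ m ∈ Finset.range n, ε m * xss (eVec m) := by
        exact Finset.sum_congr rfl fun m _ => habs m
    _ = xss (∑ m ∈ Finset.range n, ε m • eVec m) := by
        rw [map_sum]
        simp [map_smul, smul_eq_mul]
    _ ≤ ‖xss‖ * 1 := by
        calc xss (∑ m ∈ Finset.range n, ε m • eVec m)
            ≤ ‖xss (∑ m ∈ Finset.range n, ε m • eVec m)‖ := le_abs_self _
          _ ≤ ‖xss‖ * ‖(∑ m ∈ Finset.range n, ε m • eVec m : ellInfty)‖ :=
              xss.le_opNorm _
          _ ≤ ‖xss‖ * 1 := by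
              apply mul_le_mul_of_nonneg_left _ (norm_nonneg _)
              apply norm_sum_smul_eVec_le xss _ ε
              intro m
              by_cases h : 0 ≤ xss (eVec m) <;> simp [hε, h]
    _ = ‖xss‖ := mul_one _

lemma norm_partial_le (n : ℕ) :
    ‖(eStar - ∑ m ∈ Finset.range n, eVec m : ellInfty)‖ ≤ 1 := by
  apply lp.norm_le_of_forall_le zero_le_one
  intro k
  have hsum : (∑ m ∈ Finset.range n, eVec m : ellInfty) k
      = ∑ m ∈ Finset.range n, (eVec m k) := by
    rw [lp.coeFn_sum]; simp [Finset.sum_apply]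
  have : (eStar - ∑ m ∈ Finset.range n, eVec m : ellInfty) k
      = 1 - ∑ m ∈ Finset.range n, (eVec m k) := by
    rw [lp.coeFn_sub, Pi.sub_apply, hsum]; rfl
  rw [this]
  by_cases hk : k < n
  · rw [Finset.sum_eq_single k]
    · simp [eVec, lp.single_apply_self]
    · intro m _ hm
      simp [eVec, lp.single_apply_ne _ _ _ (Ne.symm hm), Pi.single_apply, Ne.symm hm]
    · intro h; exact absurd (Finset.mem_range.mpr hk) h
  · rw [Finset.sum_eq_zero]
    · simp
    · intro m hm
      have : k ≠ m := by
        intro h; exact hk (h ▸ Finset.mem_range.mp hm)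
      simp [eVec, lp.single_apply_ne _ _ _ this, Pi.single_apply, this]

theorem wtriple_norm_one
    (w : StrongDual ℝ (StrongDual ℝ ellInfty))
    (hw : ∀ xss : StrongDual ℝ ellInfty,
      w xss = xss eStar - ∑' m, xss (eVec m)) :
    ‖w‖ = 1 := by
  -- upper bound
  have hub : ‖w‖ ≤ 1 := by
    apply ContinuousLinearMap.opNorm_le_bound _ zero_le_one
    intro xss
    rw [hw xss, one_mul]
    have hs := summable_eVec xss
    have hlim : Filter.Tendsto
        (fun n => xss eStar - ∑ m ∈ Finset.range n, xss (eVec m))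
        Filter.atTop (nhds (xss eStar - ∑' m, xss (eVec m))) :=
      (tendsto_const_nhds.sub hs.hasSum.tendsto_sum_nat)
    have hbound : ∀ n, ‖xss eStar - ∑ m ∈ Finset.range n, xss (eVec m)‖ ≤ ‖xss‖ := by
      intro n
      have : xss eStar - ∑ m ∈ Finset.range n, xss (eVec m)
          = xss (eStar - ∑ m ∈ Finset.range n, eVec m) := by
        rw [map_sub, map_sum]
      rw [this]
      calc ‖xss (eStar - ∑ m ∈ Finset.range n, eVec m)‖
          ≤ ‖xss‖ * ‖(eStar - ∑ m ∈ Finset.range n, eVec m : ellInfty)‖ :=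
            xss.le_opNorm _
        _ ≤ ‖xss‖ * 1 :=
            mul_le_mul_of_nonneg_left (norm_partial_le n) (norm_nonneg _)
        _ = ‖xss‖ := mul_one _
    exact le_of_tendsto (hlim.norm) (Filter.Eventually.of_forall hbound)
  -- lower bound via ultrafilter limit functional
  obtain ⟨U, hU⟩ := Filter.exists_ultrafilter_le (f := (Filter.cofinite : Filter ℕ))
  have heStar : ulim U eStar = 1 := by
    apply ulim_eq
    have : ⇑eStar = fun _ : ℕ => (1 : ℝ) := rfl
    rw [this]
    exact tendsto_const_nhds
  have heVec : ∀ m, ulim U (eVec m) = 0 := by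
    intro m
    apply ulim_eq
    have hev : ∀ᶠ n in (U : Filter ℕ), (eVec m) n = 0 := by
      apply Filter.Eventually.filter_mono hU
      rw [Filter.eventually_cofinite]
      apply Set.Finite.subset (Set.finite_singleton m)
      intro n hn
      simp only [Set.mem_setOf_eq] at hn
      by_contra h
      exact hn (lp.single_apply_ne _ _ _ h)
    exact Filter.Tendsto.congr' (hev.mono fun n h => h.symm) tendsto_const_nhds
  have hwval : w (ulimCLM U) = 1 := by
    rw [hw]
    have h1 : (ulimCLM U) eStar = 1 := heStar
    have h2 : ∀ m, (ulimCLM U) (eVec m) = 0 := heVec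
    simp [h1, h2]
  have hnormle : ‖ulimCLM U‖ ≤ 1 :=
    LinearMap.mkContinuous_norm_le _ zero_le_one _
  have hlb : 1 ≤ ‖w‖ := by
    have := w.le_opNorm (ulimCLM U)
    rw [hwval] at this
    simp only [norm_one] at this
    calc (1:ℝ) ≤ ‖w‖ * ‖ulimCLM U‖ := this
      _ ≤ ‖w‖ * 1 := mul_le_mul_of_nonneg_left hnormle (norm_nonneg w)
      _ = ‖w‖ := mul_one _
  linarith
end
end

section
/- Let T : ℓ¹ → ℓ∞ be defined by (Tx)_m = x_m + 2Σ_{n>m} x_n. Then every standard unit vector e*_n of ℓ∞ lies in the range of T; explicitly, for odd n, T(2,−2,2,−2,…,2,−2,1,0,0,…) = e*_n (with the 1 in the n-th place), and for even n, T(−2,2,−2,…,2,−2,1,0,0,…) = e*_n. -/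
noncomputable section

/-- The operator T coordinatewise: (Tx)_m = x_m + 2 Σ_{n>m} x_n. -/
def Tfun (x : ℕ → ℝ) (m : ℕ) : ℝ :=
  x m + 2 * ∑' n, if m < n then x n else 0

/-- The finitely supported sequence y^{(n)}: alternating ±2 below n, 1 at n, 0 above. -/
def yseq (n m : ℕ) : ℝ :=
  if m = n then 1 else if m < n then (if Even (n - m) then 2 else -2) else 0

lemma yseq_zero_of_gt {n m : ℕ} (h : n < m) : yseq n m = 0 := by
  unfold yseq
  rw [if_neg (by omega), if_neg (by omega)]

lemma sumIoc (n : ℕ) : ∀ d : ℕ, d ≤ n →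
    ∑ k ∈ Finset.Ioc (n - d) n, yseq n k =
      if d = 0 then 0 else if Even d then -1 else 1 := by
  intro d
  induction d with
  | zero => simp
  | succ d ih =>
    intro hd
    have hm : n - (d + 1) + 1 = n - d := by omega
    have h1 : n - d ≤ n := by omega
    have hins : Finset.Ioc (n - (d + 1)) n = insert (n - d) (Finset.Ioc (n - d) n) := by
      ext k
      simp only [Finset.mem_Ioc, Finset.mem_insert]
      omega
    rw [hins, Finset.sum_insert (by simp), ih (by omega)]
    have hy : yseq n (n - d) = if d = 0 then 1 else if Even d then 2 else -2 := by
      unfold yseq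
      rcases Nat.eq_zero_or_pos d with h | h
      · subst h; simp
      · rw [if_neg (by omega), if_pos (by omega)]
        have : n - (n - d) = d := by omega
        rw [this, if_neg (show ¬ d = 0 by omega)]
    rw [hy]
    rcases Nat.eq_zero_or_pos d with h | h
    · subst h; norm_num
    · have h1 : d ≠ 0 := by omega
      have h2 : ¬ (d + 1 = 0) := by omega
      rcases Nat.even_or_odd d with he | ho
      · have h3 : ¬ Even (d + 1) := by simp [Nat.even_add_one, he]
        simp only [h1, h2, he, h3, if_true, if_false, ite_false]
        norm_num
      · have ho' : ¬ Even d := Nat.not_even_iff_odd.mpr ho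
        have h3 : Even (d + 1) := Nat.even_add_one.mpr ho'
        simp only [h1, h2, ho', h3, if_true, if_false, ite_false]
        norm_num

theorem unit_vectors_in_range_T (n : ℕ) :
    Summable (fun m => |yseq n m|) ∧
    ∀ m : ℕ, Tfun (yseq n) m = if m = n then 1 else 0 := by
  constructor
  · apply summable_of_ne_finset_zero (s := Finset.range (n + 1))
    intro m hm
    simp only [Finset.mem_range, not_lt] at hm
    rw [yseq_zero_of_gt (by omega), abs_zero]
  · intro m
    have htsum : ∑' k, (if m < k then yseq n k else 0) =
        ∑ k ∈ Finset.Ioc m n, yseq n k := by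
      rw [tsum_eq_sum (s := Finset.Ioc m n)]
      · apply Finset.sum_congr rfl
        intro k hk
        rw [if_pos (Finset.mem_Ioc.mp hk).1]
      · intro k hk
        simp only [Finset.mem_Ioc, not_and_or, not_lt, not_le] at hk
        rcases hk with h | h
        · rw [if_neg (by omega)]
        · split <;> [exact yseq_zero_of_gt h; rfl]
    unfold Tfun
    rw [htsum]
    rcases lt_trichotomy m n with h | h | h
    · have hd : m = n - (n - m) := by omega
      rw [if_neg (by omega)]
      rw [hd, sumIoc n (n - m) (by omega)]
      have hne : n - m ≠ 0 := by omega
      rw [if_neg hne]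
      unfold yseq
      rw [if_neg (by omega), if_pos (by omega)]
      have : n - (n - (n - m)) = n - m := by omega
      rw [this]
      split <;> norm_num
    · subst h
      rw [Finset.Ioc_self, Finset.sum_empty, if_pos rfl]
      unfold yseq
      rw [if_pos rfl]
      ring
    · rw [if_neg (by omega), Finset.Ioc_eq_empty (by omega), Finset.sum_empty,
        yseq_zero_of_gt h]
      ring
end
end
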